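/- Let (X_n, d_n), n ∈ ℕ, be a sequence of separable Borel pseudo-metric spaces, p ∈ [1, +∞), and for each n let S_n = {s^n_m : m ∈ ℕ} be a countable dense subset of X_n on which d_n is a metric (i.e. d_n(s^n_m, s^n_k) > 0 for m ≠ k). Then E((X_n)_{n∈ℕ}; p) and E((S_n)_{n∈ℕ}; p) are Borel bireducible. -/

import Mathlib

open scoped NNReal


/-- A pseudo-metric on a set `X`. -/
structure IsPseudometric {X : Type*} (d : X → X → ℝ) : Prop where
  nonneg : ∀ x y, 0 ≤ d x y
  refl : ∀ x, d x x = 0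
  symm : ∀ x y, d x y = d y x
  triangle : ∀ x y z, d x z ≤ d x y + d y z

/-- `E` is Borel reducible to `F` (w.r.t. the Borel σ-algebras of the topologies). -/
def BorelReducible {α β : Type*} [TopologicalSpace α] [TopologicalSpace β]
    (E : α → α → Prop) (F : β → β → Prop) : Prop :=
  ∃ θ : α → β, @Measurable α β (borel α) (borel β) θ ∧ ∀ x y, E x y ↔ F (θ x) (θ y)

/-- `E` and `F` are Borel bireducible. -/
def BorelBireducible {α β : Type*} [TopologicalSpace α] [TopologicalSpace β]
    (E : α → α → Prop) (F : β → β → Prop) : Prop :=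
  BorelReducible E F ∧ BorelReducible F E

lemma measurable_iff_borel {α β : Type*} [TopologicalSpace α] [TopologicalSpace β]
    [mα : MeasurableSpace α] [mβ : MeasurableSpace β] [BorelSpace α] [BorelSpace β] {f : α → β} :
    @Measurable α β (borel α) (borel β) f ↔ Measurable f := by
  rw [← BorelSpace.measurable_eq (α := α), ← BorelSpace.measurable_eq (α := β)]

lemma real_rpow_add_le {a b : ℝ} (ha : 0 ≤ a) (hb : 0 ≤ b) {p : ℝ} (hp : 1 ≤ p) :
    (a + b) ^ p ≤ 2 ^ (p - 1) * (a ^ p + b ^ p) := by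
  lift a to ℝ≥0 using ha
  lift b to ℝ≥0 using hb
  exact_mod_cast NNReal.rpow_add_le_mul_rpow_add_rpow a b hp

lemma summable_rpow_of_le {a b : ℕ → ℝ} {p : ℝ} (hp : 1 ≤ p)
    (ha : ∀ n, 0 ≤ a n) (hb : ∀ n, 0 ≤ b n)
    (hle : ∀ n, b n ≤ a n + 2 * (2⁻¹ : ℝ) ^ n)
    (hs : Summable fun n => a n ^ p) : Summable fun n => b n ^ p := by
  have hp0 : (0 : ℝ) < p := lt_of_lt_of_le one_pos hp
  have hcp : ∀ n : ℕ, ((2 : ℝ) * 2⁻¹ ^ n) ^ p = 2 ^ p * ((2⁻¹ : ℝ) ^ p) ^ n := by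
    intro n
    rw [Real.mul_rpow (by norm_num) (by positivity), ← Real.rpow_natCast (2⁻¹ : ℝ) n,
      ← Real.rpow_natCast ((2⁻¹ : ℝ) ^ p) n, ← Real.rpow_mul (by norm_num),
      ← Real.rpow_mul (by norm_num), mul_comm p (n : ℝ)]
  have hgeo : Summable fun n : ℕ => ((2⁻¹ : ℝ) ^ p) ^ n :=
    summable_geometric_of_lt_one (Real.rpow_nonneg (by norm_num) p)
      (Real.rpow_lt_one (by norm_num) (by norm_num) hp0)
  have hc : Summable fun n : ℕ => ((2 : ℝ) * 2⁻¹ ^ n) ^ p := by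
    simp only [hcp]
    exact hgeo.mul_left _
  have hsum : Summable fun n : ℕ =>
      2 ^ (p - 1) * (a n ^ p + ((2 : ℝ) * 2⁻¹ ^ n) ^ p) := (hs.add hc).mul_left _
  refine Summable.of_nonneg_of_le (fun n => Real.rpow_nonneg (hb n) p) (fun n => ?_) hsum
  calc b n ^ p ≤ (a n + 2 * (2⁻¹ : ℝ) ^ n) ^ p :=
        Real.rpow_le_rpow (hb n) (hle n) hp0.le
    _ ≤ 2 ^ (p - 1) * (a n ^ p + ((2 : ℝ) * 2⁻¹ ^ n) ^ p) :=
        real_rpow_add_le (ha n) (by positivity) hp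

theorem stmt2
    {X : ℕ → Type*} [∀ n, TopologicalSpace (X n)] [∀ n, PolishSpace (X n)]
    (d : ∀ n, X n → X n → ℝ) (hd : ∀ n, IsPseudometric (d n))
    (hdBorel : ∀ n,
      @Measurable (X n × X n) ℝ (borel (X n × X n)) (borel ℝ) fun pr => d n pr.1 pr.2)
    (p : ℝ) (hp : 1 ≤ p)
    -- `S n = {s n m : m ∈ ℕ}` is a countable subset of `X n` on which `d n` is a metric,
    (s : ∀ n, ℕ → X n)
    (hmetric : ∀ n, ∀ m k : ℕ, m ≠ k → 0 < d n (s n m) (s n k))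
    -- and `S n` is dense in `(X n, d n)`:
    (hdense : ∀ n, ∀ u : X n, ∀ e : ℝ, 0 < e → ∃ m : ℕ, d n u (s n m) < e) :
    BorelBireducible
      (fun x y : ∀ n, X n => Summable fun n => d n (x n) (y n) ^ p)
      (fun x y : ∀ n, Set.range (s n) =>
        Summable fun n => d n (x n : X n) (y n : X n) ^ p) := by
  classical
  letI : ∀ n, MeasurableSpace (X n) := fun n => borel (X n)
  haveI : ∀ n, BorelSpace (X n) := fun n => ⟨rfl⟩
  have hdm : ∀ n, Measurable fun pr : X n × X n => d n pr.1 pr.2 := fun n =>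
    measurable_iff_borel.mp (hdBorel n)
  constructor
  · -- X → S
    have hex : ∀ n (u : X n), ∃ m, d n u (s n m) < (2⁻¹ : ℝ) ^ n := fun n u =>
      hdense n u _ (by positivity)
    set θ : (∀ n, X n) → ∀ n, Set.range (s n) :=
      fun x n => ⟨s n (Nat.find (hex n (x n))), Set.mem_range_self _⟩ with hθ
    have hθclose : ∀ (x : ∀ n, X n) (n : ℕ), d n (x n) (θ x n : X n) < (2⁻¹ : ℝ) ^ n :=
      fun x n => Nat.find_spec (hex n (x n))
    have hθmeas : Measurable θ := by
      refine measurable_pi_lambda _ fun n => ?_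
      have hf : Measurable fun u : X n =>
          (⟨s n (Nat.find (hex n u)), Set.mem_range_self _⟩ : Set.range (s n)) := by
        refine Measurable.find (f := fun m (_ : X n) =>
          (⟨s n m, Set.mem_range_self m⟩ : Set.range (s n)))
          (fun m => measurable_const) (fun m => ?_) (fun u => hex n u)
        have : Measurable fun u : X n => d n u (s n m) :=
          (hdm n).comp (measurable_id.prodMk measurable_const)
        exact measurableSet_lt this measurable_const
      exact hf.comp (measurable_pi_apply n)
    clear_value θ
    clear hθ hex
    refine ⟨θ, ?_, ?_⟩
    · rw [measurable_iff_borel]; exact hθmeas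
    · intro x y
      have key : ∀ (x y : ∀ n, X n) (n : ℕ),
          d n (θ x n : X n) (θ y n : X n) ≤ d n (x n) (y n) + 2 * (2⁻¹ : ℝ) ^ n := by
        intro x y n
        have t1 : d n (θ x n : X n) (θ y n : X n) ≤
            d n (θ x n : X n) (x n) + (d n (x n) (y n) + d n (y n) (θ y n : X n)) :=
          le_trans ((hd n).triangle _ (x n) _)
            (add_le_add_right ((hd n).triangle _ (y n) _) _)
        have e1 : d n (θ x n : X n) (x n) = d n (x n) (θ x n : X n) := (hd n).symm _ _
        have h1 := hθclose x n
        have h2 := hθclose y n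
        rw [e1] at t1
        linarith
      have key2 : ∀ (x y : ∀ n, X n) (n : ℕ),
          d n (x n) (y n) ≤ d n (θ x n : X n) (θ y n : X n) + 2 * (2⁻¹ : ℝ) ^ n := by
        intro x y n
        have t1 : d n (x n) (y n) ≤
            d n (x n) (θ x n : X n) + (d n (θ x n : X n) (θ y n : X n) +
              d n (θ y n : X n) (y n)) :=
          le_trans ((hd n).triangle _ (θ x n : X n) _)
            (add_le_add_right ((hd n).triangle _ (θ y n : X n) _) _)
        have e1 : d n (θ y n : X n) (y n) = d n (y n) (θ y n : X n) := (hd n).symm _ _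
        have h1 := hθclose x n
        have h2 := hθclose y n
        rw [e1] at t1
        linarith
      constructor
      · exact fun h => summable_rpow_of_le hp (fun n => (hd n).nonneg _ _)
          (fun n => (hd n).nonneg _ _) (key x y) h
      · exact fun h => summable_rpow_of_le hp (fun n => (hd n).nonneg _ _)
          (fun n => (hd n).nonneg _ _) (key2 x y) h
  · -- S → X
    refine ⟨fun x n => (x n : X n), ?_, fun x y => Iff.rfl⟩
    rw [measurable_iff_borel]
    exact measurable_pi_lambda _ fun n => measurable_subtype_coe.comp (measurable_pi_apply n)
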